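/- arXiv:0807.2648 — 2 statements merged into one kernel-verified Lean document; each statement's English description precedes it below -/
import Mathlib

section
/- Let Q ⊂ ℝ² be a compact convex set of area A > 0 and fix w_max > 0, ρ > 0. Let p* = (p*₁, …, p*_m) ∈ Q^m be any minimizer of H_m(·, Q) (an m-median configuration), and let θ₁, …, θ_m ∈ ℝ be arbitrary headings. Then the coverage cost of the Median Stationing algorithm for DD robots, T_MS^DD = (1/A) ∫_Q min_{1≤i≤m} τ_DD((p*_i, θ_i), q) dq, satisfies H*_m(Q)/w_max ≤ T_MS^DD ≤ H*_m(Q)/w_max + π ρ / (2 w_max). -/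
open MeasureTheory Filter Topology Real

noncomputable section

/-- The plane `ℝ²` with the Euclidean norm. -/
abbrev Plane : Type := EuclideanSpace ℝ (Fin 2)

/-- A differential-drive (DD) trajectory with wheel-speed bound `wmax` and half-axle
length `ρ`: coordinates `x y θ` driven by measurable wheel-speed controls `wl, wr`
bounded by `wmax`, satisfying (in integral form) `x' = (wl+wr)/2 ⬝ cos θ`,
`y' = (wl+wr)/2 ⬝ sin θ`, `θ' = (wr - wl)/(2ρ)`. -/
def IsDDTraj (wmax ρ : ℝ) (x y θ : ℝ → ℝ) : Prop :=
  ∃ wl wr : ℝ → ℝ, Measurable wl ∧ Measurable wr ∧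
    (∀ t, |wl t| ≤ wmax) ∧ (∀ t, |wr t| ≤ wmax) ∧
    (∀ t, x t = x 0 + ∫ s in (0:ℝ)..t, (wl s + wr s) / 2 * Real.cos (θ s)) ∧
    (∀ t, y t = y 0 + ∫ s in (0:ℝ)..t, (wl s + wr s) / 2 * Real.sin (θ s)) ∧
    (∀ t, θ t = θ 0 + ∫ s in (0:ℝ)..t, (wr s - wl s) / (2 * ρ))

/-- Minimum travel time of a DD robot from configuration `(p, θ₀)` to the point `q`. -/
def tauDD (wmax ρ : ℝ) (p : Plane) (θ₀ : ℝ) (q : Plane) : ℝ :=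
  sInf {T : ℝ | 0 ≤ T ∧ ∃ x y θ : ℝ → ℝ, IsDDTraj wmax ρ x y θ ∧
    x 0 = p 0 ∧ y 0 = p 1 ∧ θ 0 = θ₀ ∧ x T = q 0 ∧ y T = q 1}

/-- Reachable set at time `t` of a DD robot starting at configuration `(p, θ₀)`. -/
def reachDD (wmax ρ : ℝ) (p : Plane) (θ₀ : ℝ) (t : ℝ) : Set Plane :=
  {q | tauDD wmax ρ p θ₀ q ≤ t}


lemma intervalIntegrable_of_bdd {f : ℝ → ℝ} {C a b : ℝ} (hf : Measurable f)
    (hC : ∀ s, |f s| ≤ C) : IntervalIntegrable f volume a b := by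
  rw [intervalIntegrable_iff]
  apply Integrable.mono' (g := fun _ => C) _ hf.aestronglyMeasurable.restrict
    (Eventually.of_forall fun s => by simpa using hC s)
  exact integrableOn_const measure_Ioc_lt_top.ne

lemma primitive_continuous {f : ℝ → ℝ} {C : ℝ} (hf : Measurable f)
    (hC : ∀ s, |f s| ≤ C) {g : ℝ → ℝ}
    (hg : ∀ t, g t = g 0 + ∫ s in (0:ℝ)..t, f s) : Continuous g := by
  have : Continuous fun t => g 0 + ∫ s in (0:ℝ)..t, f s := by
    exact continuous_const.add
      (intervalIntegral.continuous_primitive (fun a b => intervalIntegrable_of_bdd hf hC) 0)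
  exact this.congr fun t => (hg t).symm

/-- Concatenation of primitives. -/
lemma concat_integral {f1 f2 g1 g2 : ℝ → ℝ} {C T : ℝ}
    (hf1 : Measurable f1) (hf2 : Measurable f2)
    (hC1 : ∀ s, |f1 s| ≤ C) (hC2 : ∀ s, |f2 s| ≤ C)
    (hg1 : ∀ t, g1 t = g1 0 + ∫ s in (0:ℝ)..t, f1 s)
    (hg2 : ∀ t, g2 t = g2 0 + ∫ s in (0:ℝ)..t, f2 s)
    (hT : 0 ≤ T) (hmatch : g2 0 = g1 T) :
    ∀ t, (if t < T then g1 t else g2 (t - T)) =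
      (if (0:ℝ) < T then g1 0 else g2 (0 - T)) +
        ∫ s in (0:ℝ)..t, (if s < T then f1 s else f2 (s - T)) := by
  set F : ℝ → ℝ := fun s => if s < T then f1 s else f2 (s - T) with hF
  have hFm : Measurable F := Measurable.ite (measurableSet_lt measurable_id measurable_const)
    hf1 (hf2.comp (measurable_id.sub measurable_const))
  have hFC : ∀ s, |F s| ≤ C := fun s => by by_cases h : s < T <;> simp [hF, h, hC1 s, hC2 (s - T)]
  have hFint : ∀ a b : ℝ, IntervalIntegrable F volume a b :=
    fun a b => intervalIntegrable_of_bdd hFm hFC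
  have hne : ∀ᵐ s : ℝ, s ≠ T := by
    rw [ae_iff]; simpa using (by simp : volume {T} = 0)
  have hG0 : (if (0:ℝ) < T then g1 0 else g2 (0 - T)) = g1 0 := by
    by_cases h : (0:ℝ) < T
    · simp [h]
    · have hT0 : T = 0 := le_antisymm (not_lt.1 h) hT
      simp [hT0, hmatch, hT0 ▸ hmatch]
  -- integral up to t ≤ T
  have key1 : ∀ t, t ≤ T → (∫ s in (0:ℝ)..t, F s) = ∫ s in (0:ℝ)..t, f1 s := by
    intro t ht
    apply intervalIntegral.integral_congr_ae
    filter_upwards [hne] with s hs hmem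
    have : s ≤ max 0 t := (Set.uIoc_subset_uIcc hmem).2
    have hsT : s < T := lt_of_le_of_ne (le_trans this (max_le hT ht)) hs
    simp [hF, hsT]
  intro t
  rw [hG0]
  by_cases ht : t ≤ T
  · have hGt : (if t < T then g1 t else g2 (t - T)) = g1 t := by
      by_cases h : t < T
      · simp [h]
      · have : t = T := le_antisymm ht (not_lt.1 h)
        simp [this, hmatch.symm]
    rw [hGt, key1 t ht, ← hg1 t]
  · push_neg at ht
    have h2 : (∫ s in T..t, F s) = ∫ s in (0:ℝ)..(t - T), f2 s := by
      have : (∫ s in T..t, F s) = ∫ s in T..t, f2 (s - T) := by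
        apply intervalIntegral.integral_congr_ae
        filter_upwards [hne] with s hs hmem
        rw [Set.uIoc_of_le ht.le] at hmem
        have : ¬ s < T := not_lt.2 (le_of_lt hmem.1)
        simp [hF, this]
      rw [this, intervalIntegral.integral_comp_sub_right f2 T, sub_self]
    have hsplit : (∫ s in (0:ℝ)..t, F s) = (∫ s in (0:ℝ)..T, F s) + ∫ s in T..t, F s :=
      (intervalIntegral.integral_add_adjacent_intervals (hFint 0 T) (hFint T t)).symm
    have hGt : (if t < T then g1 t else g2 (t - T)) = g2 (t - T) := by
      simp [not_lt.2 ht.le]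
    rw [hGt, hsplit, key1 T le_rfl, h2, hg2 (t - T), hmatch, hg1 T]
    ring

/-- Feasibility: configuration-to-configuration in time `T`. -/
def Feas (wmax ρ x0 y0 θ0 x1 y1 θ1 T : ℝ) : Prop :=
  0 ≤ T ∧ ∃ x y θ : ℝ → ℝ, IsDDTraj wmax ρ x y θ ∧
    x 0 = x0 ∧ y 0 = y0 ∧ θ 0 = θ0 ∧ x T = x1 ∧ y T = y1 ∧ θ T = θ1

variable {wmax ρ : ℝ}

lemma feas_straight (hw : 0 < wmax) (x0 y0 θ0 : ℝ) {v T : ℝ} (hv : |v| ≤ wmax) (hT : 0 ≤ T) :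
    Feas wmax ρ x0 y0 θ0 (x0 + v * T * Real.cos θ0) (y0 + v * T * Real.sin θ0) θ0 T := by
  refine ⟨hT, fun t => x0 + v * t * Real.cos θ0, fun t => y0 + v * t * Real.sin θ0,
    fun _ => θ0, ⟨fun _ => v, fun _ => v, measurable_const, measurable_const,
      fun _ => hv, fun _ => hv, ?_, ?_, ?_⟩, by simp, by simp, rfl, rfl, rfl, rfl⟩
  · intro t; simp; try ring
  · intro t; simp; try ring
  · intro t; simp

lemma feas_rot (hw : 0 < wmax) (hρ : 0 < ρ) (x0 y0 θ0 β : ℝ) :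
    Feas wmax ρ x0 y0 θ0 x0 y0 (θ0 + β) (ρ * |β| / wmax) := by
  set σ : ℝ := if β < 0 then -1 else 1 with hσ
  have hσβ : σ * (wmax / ρ) * (ρ * |β| / wmax) = β := by
    by_cases h : β < 0
    · rw [hσ, if_pos h, abs_of_neg h]; field_simp
    · rw [hσ, if_neg h, abs_of_nonneg (not_lt.1 h)]; field_simp
  have hσ1 : |σ| = 1 := by by_cases h : β < 0 <;> simp [hσ, h]
  refine ⟨by positivity, fun _ => x0, fun _ => y0, fun t => θ0 + σ * (wmax / ρ) * t,
    ⟨fun _ => -(σ * wmax), fun _ => σ * wmax, measurable_const, measurable_const,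
      fun _ => by simp [abs_mul, hσ1, abs_of_pos hw], fun _ => by simp [abs_mul, hσ1, abs_of_pos hw],
      ?_, ?_, ?_⟩, rfl, rfl, by simp, rfl, rfl, by show θ0 + σ * (wmax / ρ) * (ρ * |β| / wmax) = θ0 + β; rw [hσβ]⟩
  · intro t; simp
  · intro t; simp
  · intro t
    have : (σ * wmax - -(σ * wmax)) / (2 * ρ) = σ * (wmax / ρ) := by field_simp; ring
    simp only [this, intervalIntegral.integral_const, smul_eq_mul]
    ring

lemma feas_drive (hw : 0 < wmax) (x0 y0 θ0 ℓ : ℝ) :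
    Feas wmax ρ x0 y0 θ0 (x0 + ℓ * Real.cos θ0) (y0 + ℓ * Real.sin θ0) θ0 (|ℓ| / wmax) := by
  set σ : ℝ := if ℓ < 0 then -1 else 1 with hσ
  have h1 : σ * wmax * (|ℓ| / wmax) = ℓ := by
    by_cases h : ℓ < 0
    · rw [hσ, if_pos h, abs_of_neg h]; field_simp
    · rw [hσ, if_neg h, abs_of_nonneg (not_lt.1 h)]; field_simp
  have hσ1 : |σ * wmax| ≤ wmax := by
    have : |σ| = 1 := by by_cases h : ℓ < 0 <;> simp [hσ, h]
    simp [abs_mul, this, abs_of_pos hw]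
  have := feas_straight (ρ := ρ) hw x0 y0 θ0 hσ1 (by positivity : (0:ℝ) ≤ |ℓ| / wmax)
  rwa [h1] at this

lemma rot_bd (hρ : 0 < ρ) {a b : ℝ → ℝ} {wm : ℝ}
    (ha : ∀ t, |a t| ≤ wm) (hb : ∀ t, |b t| ≤ wm) :
    ∀ s, |(b s - a s) / (2 * ρ)| ≤ wm / ρ := by
  intro s
  rw [abs_div, abs_of_pos (by positivity : (0:ℝ) < 2 * ρ)]
  rw [div_le_div_iff₀ (by positivity) hρ]
  nlinarith [ha s, hb s, abs_sub (b s) (a s), abs_nonneg (b s - a s)]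

lemma theta_cont (hρ : 0 < ρ) {a b θf : ℝ → ℝ} {wm : ℝ}
    (ham : Measurable a) (hbm : Measurable b) (ha : ∀ t, |a t| ≤ wm) (hb : ∀ t, |b t| ≤ wm)
    (hθ : ∀ t, θf t = θf 0 + ∫ s in (0:ℝ)..t, (b s - a s) / (2 * ρ)) :
    Continuous θf :=
  primitive_continuous ((hbm.sub ham).div_const _) (rot_bd hρ ha hb) hθ

lemma feas_trans (hρ : 0 < ρ) {x0 y0 θ0 x1 y1 θ1 x2 y2 θ2 T S : ℝ}
    (h1 : Feas wmax ρ x0 y0 θ0 x1 y1 θ1 T) (h2 : Feas wmax ρ x1 y1 θ1 x2 y2 θ2 S) :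
    Feas wmax ρ x0 y0 θ0 x2 y2 θ2 (T + S) := by
  obtain ⟨hT, xf1, yf1, θf1, ⟨a1, b1, ha1m, hb1m, ha1, hb1, hx1, hy1, hθ1⟩,
    hx10, hy10, hθ10, hx1T, hy1T, hθ1T⟩ := h1
  obtain ⟨hS, xf2, yf2, θf2, ⟨a2, b2, ha2m, hb2m, ha2, hb2, hx2, hy2, hθ2⟩,
    hx20, hy20, hθ20, hx2S, hy2S, hθ2S⟩ := h2
  have hwm : 0 ≤ wmax := (abs_nonneg _).trans (ha1 0)
  have hθ1c : Continuous θf1 := theta_cont hρ ha1m hb1m ha1 hb1 hθ1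
  have hθ2c : Continuous θf2 := theta_cont hρ ha2m hb2m ha2 hb2 hθ2
  set A : ℝ → ℝ := fun s => if s < T then a1 s else a2 (s - T) with hA
  set B : ℝ → ℝ := fun s => if s < T then b1 s else b2 (s - T) with hB
  set X : ℝ → ℝ := fun t => if t < T then xf1 t else xf2 (t - T) with hX
  set Y : ℝ → ℝ := fun t => if t < T then yf1 t else yf2 (t - T) with hY
  set Θ : ℝ → ℝ := fun t => if t < T then θf1 t else θf2 (t - T) with hΘ
  have hAm : Measurable A := Measurable.ite (measurableSet_lt measurable_id measurable_const)
    ha1m (ha2m.comp (measurable_id.sub measurable_const))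
  have hBm : Measurable B := Measurable.ite (measurableSet_lt measurable_id measurable_const)
    hb1m (hb2m.comp (measurable_id.sub measurable_const))
  have hAb : ∀ s, |A s| ≤ wmax := fun s => by
    by_cases h : s < T <;> simp only [hA, h, if_true, if_false] <;> [exact ha1 s; exact ha2 _]
  have hBb : ∀ s, |B s| ≤ wmax := fun s => by
    by_cases h : s < T <;> simp only [hB, h, if_true, if_false] <;> [exact hb1 s; exact hb2 _]
  have mk_b : ∀ (u v g : ℝ → ℝ), (∀ s, |u s| ≤ wmax) → (∀ s, |v s| ≤ wmax) →
      (∀ s, |g s| ≤ 1) → ∀ s, |(u s + v s) / 2 * g s| ≤ wmax := by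
    intro u v g hu hv hg s
    have h1 : |(u s + v s) / 2| ≤ wmax := by
      rw [abs_div, abs_two]
      have := abs_add_le (u s) (v s)
      linarith [hu s, hv s]
    calc |(u s + v s) / 2 * g s| = |(u s + v s) / 2| * |g s| := abs_mul _ _
      _ ≤ wmax * 1 := mul_le_mul h1 (hg s) (abs_nonneg _) hwm
      _ = wmax := mul_one _
  have hcx := concat_integral (C := wmax) (T := T)
    (((ha1m.add hb1m).div_const 2).mul (Real.continuous_cos.comp hθ1c).measurable)
    (((ha2m.add hb2m).div_const 2).mul (Real.continuous_cos.comp hθ2c).measurable)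
    (mk_b a1 b1 _ ha1 hb1 (fun s => Real.abs_cos_le_one _))
    (mk_b a2 b2 _ ha2 hb2 (fun s => Real.abs_cos_le_one _))
    hx1 hx2 hT (hx20.trans hx1T.symm)
  have hcy := concat_integral (C := wmax) (T := T)
    (((ha1m.add hb1m).div_const 2).mul (Real.continuous_sin.comp hθ1c).measurable)
    (((ha2m.add hb2m).div_const 2).mul (Real.continuous_sin.comp hθ2c).measurable)
    (mk_b a1 b1 _ ha1 hb1 (fun s => Real.abs_sin_le_one _))
    (mk_b a2 b2 _ ha2 hb2 (fun s => Real.abs_sin_le_one _))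
    hy1 hy2 hT (hy20.trans hy1T.symm)
  have hcθ := concat_integral (C := wmax / ρ) (T := T)
    ((hb1m.sub ha1m).div_const _) ((hb2m.sub ha2m).div_const _)
    (rot_bd hρ ha1 hb1) (rot_bd hρ ha2 hb2)
    hθ1 hθ2 hT (hθ20.trans hθ1T.symm)
  have hTS : ¬ T + S < T := not_lt.2 (le_add_of_nonneg_right hS)
  refine ⟨by linarith, X, Y, Θ, ⟨A, B, hAm, hBm, hAb, hBb, ?_, ?_, ?_⟩,
    ?_, ?_, ?_, ?_, ?_, ?_⟩
  · intro t
    have heq : (fun s => (A s + B s) / 2 * Real.cos (Θ s)) =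
        (fun s => if s < T then (a1 s + b1 s) / 2 * Real.cos (θf1 s)
          else (a2 (s - T) + b2 (s - T)) / 2 * Real.cos (θf2 (s - T))) := by
      funext s; by_cases h : s < T <;> simp [hA, hB, hΘ, h]
    show X t = X 0 + ∫ s in (0:ℝ)..t, (A s + B s) / 2 * Real.cos (Θ s)
    simp only [heq]
    exact hcx t
  · intro t
    have heq : (fun s => (A s + B s) / 2 * Real.sin (Θ s)) =
        (fun s => if s < T then (a1 s + b1 s) / 2 * Real.sin (θf1 s)
          else (a2 (s - T) + b2 (s - T)) / 2 * Real.sin (θf2 (s - T))) := by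
      funext s; by_cases h : s < T <;> simp [hA, hB, hΘ, h]
    show Y t = Y 0 + ∫ s in (0:ℝ)..t, (A s + B s) / 2 * Real.sin (Θ s)
    simp only [heq]
    exact hcy t
  · intro t
    have heq : (fun s => (B s - A s) / (2 * ρ)) =
        (fun s => if s < T then (b1 s - a1 s) / (2 * ρ)
          else (b2 (s - T) - a2 (s - T)) / (2 * ρ)) := by
      funext s; by_cases h : s < T <;> simp [hA, hB, h]
    show Θ t = Θ 0 + ∫ s in (0:ℝ)..t, (B s - A s) / (2 * ρ)
    simp only [heq]
    exact hcθ t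
  · show (if (0:ℝ) < T then xf1 0 else xf2 (0 - T)) = x0
    by_cases h : (0:ℝ) < T
    · simp [h, hx10]
    · have hT0 : T = 0 := le_antisymm (not_lt.1 h) hT
      subst hT0
      rw [if_neg h, sub_zero, hx20, ← hx1T, hx10]
  · show (if (0:ℝ) < T then yf1 0 else yf2 (0 - T)) = y0
    by_cases h : (0:ℝ) < T
    · simp [h, hy10]
    · have hT0 : T = 0 := le_antisymm (not_lt.1 h) hT
      subst hT0
      rw [if_neg h, sub_zero, hy20, ← hy1T, hy10]
  · show (if (0:ℝ) < T then θf1 0 else θf2 (0 - T)) = θ0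
    by_cases h : (0:ℝ) < T
    · simp [h, hθ10]
    · have hT0 : T = 0 := le_antisymm (not_lt.1 h) hT
      subst hT0
      rw [if_neg h, sub_zero, hθ20, ← hθ1T, hθ10]
  · show (if T + S < T then xf1 (T + S) else xf2 (T + S - T)) = x2
    rw [if_neg hTS, add_sub_cancel_left, hx2S]
  · show (if T + S < T then yf1 (T + S) else yf2 (T + S - T)) = y2
    rw [if_neg hTS, add_sub_cancel_left, hy2S]
  · show (if T + S < T then θf1 (T + S) else θf2 (T + S - T)) = θ2
    rw [if_neg hTS, add_sub_cancel_left, hθ2S]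

lemma plane_norm (z w : Plane) : ‖z - w‖ = Real.sqrt ((z 0 - w 0)^2 + (z 1 - w 1)^2) := by
  rw [EuclideanSpace.norm_eq]
  simp [Fin.sum_univ_two, PiLp.sub_apply, Real.norm_eq_abs, sq_abs]

lemma tau_mem {p q : Plane} {θ0 θ1 T : ℝ}
    (h : Feas wmax ρ (p 0) (p 1) θ0 (q 0) (q 1) θ1 T) :
    T ∈ {T : ℝ | 0 ≤ T ∧ ∃ x y θ : ℝ → ℝ, IsDDTraj wmax ρ x y θ ∧
      x 0 = p 0 ∧ y 0 = p 1 ∧ θ 0 = θ0 ∧ x T = q 0 ∧ y T = q 1} := by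
  obtain ⟨hT, x, y, θ, htraj, h1, h2, h3, h4, h5, _⟩ := h
  exact ⟨hT, x, y, θ, htraj, h1, h2, h3, h4, h5⟩

lemma tauDD_le_of_feas {p q : Plane} {θ0 θ1 T : ℝ}
    (h : Feas wmax ρ (p 0) (p 1) θ0 (q 0) (q 1) θ1 T) :
    tauDD wmax ρ p θ0 q ≤ T :=
  csInf_le ⟨0, fun _ ht => ht.1⟩ (tau_mem h)

lemma feas_reach (hw : 0 < wmax) (hρ : 0 < ρ) (x0 y0 θ0 q0 q1 : ℝ) :
    ∃ θ1 T, Feas wmax ρ x0 y0 θ0 q0 q1 θ1 T ∧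
      T ≤ Real.sqrt ((q0 - x0)^2 + (q1 - y0)^2) / wmax + π * ρ / (2 * wmax) := by
  set dx := q0 - x0 with hdx
  set dy := q1 - y0 with hdy
  set d := Real.sqrt (dx^2 + dy^2) with hd
  have hd0 : 0 ≤ d := Real.sqrt_nonneg _
  by_cases hdz : d = 0
  · have h0 : dx^2 + dy^2 = 0 := by
      have := Real.sqrt_eq_zero (by positivity) |>.1 hdz
      exact this
    have hdx0 : dx = 0 := by nlinarith [sq_nonneg dx, sq_nonneg dy]
    have hdy0 : dy = 0 := by nlinarith [sq_nonneg dx, sq_nonneg dy]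
    have hq0 : q0 = x0 := by rw [hdx] at hdx0; linarith
    have hq1 : q1 = y0 := by rw [hdy] at hdy0; linarith
    refine ⟨θ0, 0, ?_, by positivity⟩
    have := feas_straight (ρ := ρ) hw x0 y0 θ0 (v := 0) (T := 0) (by simp [hw.le]) le_rfl
    simpa [hq0, hq1] using this
  · have hdpos : 0 < d := lt_of_le_of_ne hd0 (Ne.symm hdz)
    have hd2 : d^2 = dx^2 + dy^2 := Real.sq_sqrt (by positivity)
    set u := dx / d with hu
    set vv := dy / d with hvv
    have huv : u^2 + vv^2 = 1 := by
      rw [hu, hvv]; field_simp; linarith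
    have hu1 : -1 ≤ u ∧ u ≤ 1 := by constructor <;> nlinarith [sq_nonneg vv]
    set ψ := if 0 ≤ vv then Real.arccos u else -Real.arccos u with hψ
    have hcosψ : Real.cos ψ = u := by
      by_cases h : 0 ≤ vv <;> simp [hψ, h, Real.cos_arccos hu1.1 hu1.2]
    have hsinψ : Real.sin ψ = vv := by
      by_cases h : 0 ≤ vv
      · rw [hψ, if_pos h, Real.sin_arccos]
        rw [show 1 - u^2 = vv^2 by linarith, Real.sqrt_sq h]
      · rw [hψ, if_neg h, Real.sin_neg, Real.sin_arccos]
        rw [show 1 - u^2 = vv^2 by linarith, Real.sqrt_sq_eq_abs,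
          abs_of_neg (not_le.1 h)]
        ring
    set k := round ((ψ - θ0) / π) with hk
    set β := ψ - θ0 - k * π with hβ
    have hπ : (0:ℝ) < π := Real.pi_pos
    have hβle : |β| ≤ π / 2 := by
      have h1 : |(ψ - θ0) / π - k| ≤ 1 / 2 := abs_sub_round _
      have h2 : β = ((ψ - θ0) / π - k) * π := by rw [hβ]; field_simp
      rw [h2, abs_mul, abs_of_pos hπ]
      nlinarith
    set σ : ℝ := ((-1 : ℝ)) ^ k with hσ
    have hσ2 : σ * σ = 1 := by
      rw [hσ, ← zpow_add₀ (by norm_num : (-1:ℝ) ≠ 0), show k + k = 2 * k by ring,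
        zpow_mul]
      norm_num
    have hσabs : |σ| = 1 := by
      have h1 : |σ| * |σ| = 1 := by rw [← abs_mul, hσ2, abs_one]
      nlinarith [abs_nonneg σ]
    have hθβ : θ0 + β = ψ - k * π := by rw [hβ]; ring
    have hcosβ : Real.cos (θ0 + β) = σ * u := by
      rw [hθβ, show ψ - k * π = -(k * π - ψ) by ring, Real.cos_neg,
        Real.cos_int_mul_pi_sub, hcosψ, hσ]
    have hsinβ : Real.sin (θ0 + β) = σ * vv := by
      rw [hθβ, show ψ - k * π = -(k * π - ψ) by ring, Real.sin_neg,
        Real.sin_int_mul_pi_sub, hsinψ, hσ]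
      ring
    have F1 := feas_rot hw hρ x0 y0 θ0 β
    have F2 := feas_drive (ρ := ρ) hw x0 y0 (θ0 + β) (σ * d)
    rw [hcosβ, hsinβ] at F2
    have hdu : d * u = dx := by rw [hu, mul_comm, div_mul_cancel₀ _ hdz]
    have hdv : d * vv = dy := by rw [hvv, mul_comm, div_mul_cancel₀ _ hdz]
    have hxend : x0 + σ * d * (σ * u) = q0 := by
      have h : σ * d * (σ * u) = (σ * σ) * (d * u) := by ring
      rw [h, hσ2, one_mul, hdu, hdx]; ring
    have hyend : y0 + σ * d * (σ * vv) = q1 := by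
      have h : σ * d * (σ * vv) = (σ * σ) * (d * vv) := by ring
      rw [h, hσ2, one_mul, hdv, hdy]; ring
    rw [hxend, hyend] at F2
    refine ⟨θ0 + β, _, feas_trans hρ F1 F2, ?_⟩
    have h1 : ρ * |β| / wmax ≤ π * ρ / (2 * wmax) := by
      have h3 : ρ * |β| ≤ π * ρ / 2 := by
        have := mul_le_mul_of_nonneg_left hβle hρ.le
        linarith
      calc ρ * |β| / wmax ≤ (π * ρ / 2) / wmax := by gcongr
        _ = π * ρ / (2 * wmax) := by ring
    have h2 : |σ * d| / wmax = d / wmax := by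
      rw [abs_mul, hσabs, one_mul, abs_of_nonneg hd0]
    calc ρ * |β| / wmax + |σ * d| / wmax = ρ * |β| / wmax + d / wmax := by rw [h2]
      _ ≤ d / wmax + π * ρ / (2 * wmax) := by linarith

lemma feas_wiggle (hw : 0 < wmax) (hρ : 0 < ρ) (x0 y0 θ0 q0 q1 W : ℝ)
    (hW0 : 0 < W) (hWle : W ≤ π / 2) :
    ∃ θ1 T, Feas wmax ρ x0 y0 θ0 q0 q1 θ1 T ∧
      T ≤ Real.sqrt ((q0 - x0)^2 + (q1 - y0)^2) * (1 + 1 / Real.sin W) / wmax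
        + 3 * ρ * W / wmax := by
  have hπ : (0:ℝ) < π := Real.pi_pos
  have hS : 0 < Real.sin W := Real.sin_pos_of_pos_of_lt_pi hW0 (by linarith)
  set dx := q0 - x0 with hdx
  set dy := q1 - y0 with hdy
  set c0 := Real.cos θ0 with hc0
  set s0 := Real.sin θ0 with hs0
  have hpyth : s0^2 + c0^2 = 1 := Real.sin_sq_add_cos_sq θ0
  set dpar := dx * c0 + dy * s0 with hdpar
  set dperp := -dx * s0 + dy * c0 with hdperp
  have hsum : dpar^2 + dperp^2 = dx^2 + dy^2 := by
    rw [hdpar, hdperp]; linear_combination (dx^2 + dy^2) * hpyth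
  set D := Real.sqrt (dx^2 + dy^2) with hD
  have hD0 : 0 ≤ D := Real.sqrt_nonneg _
  have hD2 : D^2 = dx^2 + dy^2 := Real.sq_sqrt (by positivity)
  have hdparD : |dpar| ≤ D := by
    rw [← Real.sqrt_sq_eq_abs, hD]
    apply Real.sqrt_le_sqrt; nlinarith [sq_nonneg dperp]
  have hdperpD : |dperp| ≤ D := by
    rw [← Real.sqrt_sq_eq_abs, hD]
    apply Real.sqrt_le_sqrt; nlinarith [sq_nonneg dpar]
  set ε : ℝ := if dperp < 0 then -1 else 1 with hε
  set L := |dperp| / (2 * Real.sin W) with hL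
  have hL0 : 0 ≤ L := by positivity
  have hεL : ε * (2 * L * Real.sin W) = dperp := by
    have h2L : 2 * L * Real.sin W = |dperp| := by
      rw [hL]; field_simp
    rw [h2L]
    by_cases h : dperp < 0
    · rw [hε, if_pos h, abs_of_neg h]; ring
    · rw [hε, if_neg h, abs_of_nonneg (not_lt.1 h)]; ring
  have hsε : Real.sin (ε * W) = ε * Real.sin W := by
    by_cases h : dperp < 0
    · rw [hε, if_pos h]; simp [Real.sin_neg]
    · rw [hε, if_neg h]; simp
  have hεW : |ε * W| = W := by
    have : |ε| = 1 := by by_cases h : dperp < 0 <;> simp [hε, h]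
    rw [abs_mul, this, one_mul, abs_of_pos hW0]
  have hεW2 : |(-(2 * ε * W))| = 2 * W := by
    have : |ε| = 1 := by by_cases h : dperp < 0 <;> simp [hε, h]
    rw [abs_neg, abs_mul, abs_mul, this, abs_of_pos hW0]
    norm_num
  -- five segments
  have S1 := feas_drive (ρ := ρ) hw x0 y0 θ0 dpar
  have S2 := feas_rot hw hρ (x0 + dpar * Real.cos θ0) (y0 + dpar * Real.sin θ0) θ0 (ε * W)
  have S3 := feas_drive (ρ := ρ) hw (x0 + dpar * Real.cos θ0) (y0 + dpar * Real.sin θ0)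
    (θ0 + ε * W) L
  have S4 := feas_rot hw hρ
    (x0 + dpar * Real.cos θ0 + L * Real.cos (θ0 + ε * W))
    (y0 + dpar * Real.sin θ0 + L * Real.sin (θ0 + ε * W)) (θ0 + ε * W) (-(2 * ε * W))
  have S5 := feas_drive (ρ := ρ) hw
    (x0 + dpar * Real.cos θ0 + L * Real.cos (θ0 + ε * W))
    (y0 + dpar * Real.sin θ0 + L * Real.sin (θ0 + ε * W)) (θ0 + ε * W + -(2 * ε * W)) (-L)
  have C := feas_trans hρ (feas_trans hρ (feas_trans hρ (feas_trans hρ S1 S2) S3) S4) S5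
  have hXf : x0 + dpar * Real.cos θ0 + L * Real.cos (θ0 + ε * W)
      + -L * Real.cos (θ0 + ε * W + -(2 * ε * W)) = q0 := by
    have e2 : θ0 + ε * W + -(2 * ε * W) = θ0 - ε * W := by ring
    rw [e2, Real.cos_add, Real.cos_sub, hsε, ← hc0, ← hs0]
    rw [hdx] at *
    linear_combination (-(Real.sin θ0)) * hεL + (q0 - x0) * hpyth
  have hYf : y0 + dpar * Real.sin θ0 + L * Real.sin (θ0 + ε * W)
      + -L * Real.sin (θ0 + ε * W + -(2 * ε * W)) = q1 := by
    have e2 : θ0 + ε * W + -(2 * ε * W) = θ0 - ε * W := by ring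
    rw [e2, Real.sin_add, Real.sin_sub, hsε, ← hc0, ← hs0]
    rw [hdy] at *
    linear_combination (Real.cos θ0) * hεL + (q1 - y0) * hpyth
  rw [hXf, hYf] at C
  refine ⟨_, _, C, ?_⟩
  rw [hεW, hεW2, abs_of_nonneg hL0, abs_neg, abs_of_nonneg hL0]
  have h2L : 2 * L = |dperp| / Real.sin W := by rw [hL]; field_simp
  have h1 : |dpar| + 2 * L ≤ D * (1 + 1 / Real.sin W) := by
    have hd : |dperp| / Real.sin W ≤ D / Real.sin W := by gcongr
    have hD1 : D * (1 + 1 / Real.sin W) = D + D / Real.sin W := by field_simp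
    rw [hD1, h2L]
    linarith
  have h2 : (|dpar| + 2 * L) / wmax ≤ D * (1 + 1 / Real.sin W) / wmax :=
    (div_le_div_iff_of_pos_right hw).2 h1
  have e : |dpar| / wmax + ρ * W / wmax + L / wmax + ρ * (2 * W) / wmax + L / wmax
      = (|dpar| + 2 * L) / wmax + 3 * ρ * W / wmax := by ring
  rw [e]
  linarith

lemma tau_set_nonempty (hw : 0 < wmax) (hρ : 0 < ρ) (p : Plane) (θ0 : ℝ) (q : Plane) :
    {T : ℝ | 0 ≤ T ∧ ∃ x y θ : ℝ → ℝ, IsDDTraj wmax ρ x y θ ∧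
      x 0 = p 0 ∧ y 0 = p 1 ∧ θ 0 = θ0 ∧ x T = q 0 ∧ y T = q 1}.Nonempty := by
  obtain ⟨θ1, T, hF, _⟩ := feas_reach hw hρ (p 0) (p 1) θ0 (q 0) (q 1)
  exact ⟨T, tau_mem hF⟩

lemma tauDD_nonneg (p : Plane) (θ0 : ℝ) (q : Plane) : 0 ≤ tauDD wmax ρ p θ0 q :=
  Real.sInf_nonneg (fun _ ht => ht.1)

lemma tauDD_le_upper (hw : 0 < wmax) (hρ : 0 < ρ) (p : Plane) (θ0 : ℝ) (q : Plane) :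
    tauDD wmax ρ p θ0 q ≤ ‖p - q‖ / wmax + π * ρ / (2 * wmax) := by
  obtain ⟨θ1, T, hF, hT⟩ := feas_reach hw hρ (p 0) (p 1) θ0 (q 0) (q 1)
  refine le_trans (tauDD_le_of_feas hF) (le_trans hT ?_)
  have : ‖p - q‖ = Real.sqrt ((q 0 - p 0)^2 + (q 1 - p 1)^2) := by
    rw [plane_norm]
    congr 1
    ring
  rw [this]

lemma dist_le_wmax_mul {p q : Plane} {θ0 T : ℝ}
    (hT : T ∈ {T : ℝ | 0 ≤ T ∧ ∃ x y θ : ℝ → ℝ, IsDDTraj wmax ρ x y θ ∧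
      x 0 = p 0 ∧ y 0 = p 1 ∧ θ 0 = θ0 ∧ x T = q 0 ∧ y T = q 1}) (hρ : 0 < ρ) :
    ‖p - q‖ ≤ wmax * T := by
  obtain ⟨hT0, xf, yf, θf, ⟨a, b, ham, hbm, ha, hb, hx, hy, hθ⟩, hx0, hy0, hθ0, hxT, hyT⟩ := hT
  have hwm : 0 ≤ wmax := (abs_nonneg _).trans (ha 0)
  have hθc : Continuous θf := theta_cont hρ ham hbm ha hb hθ
  set f1 : ℝ → ℝ := fun s => (a s + b s) / 2 * Real.cos (θf s) with hf1
  set f2 : ℝ → ℝ := fun s => (a s + b s) / 2 * Real.sin (θf s) with hf2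
  have hvb : ∀ s, |(a s + b s) / 2| ≤ wmax := by
    intro s
    rw [abs_div, abs_two]
    have := abs_add_le (a s) (b s)
    linarith [ha s, hb s]
  have hm1 : Measurable f1 := ((ham.add hbm).div_const 2).mul
    (Real.continuous_cos.comp hθc).measurable
  have hm2 : Measurable f2 := ((ham.add hbm).div_const 2).mul
    (Real.continuous_sin.comp hθc).measurable
  have hb1 : ∀ s, |f1 s| ≤ wmax := fun s => by
    rw [hf1, abs_mul]
    calc |(a s + b s) / 2| * |Real.cos (θf s)| ≤ wmax * 1 :=
      mul_le_mul (hvb s) (Real.abs_cos_le_one _) (abs_nonneg _) hwm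
    _ = wmax := mul_one _
  have hb2 : ∀ s, |f2 s| ≤ wmax := fun s => by
    rw [hf2, abs_mul]
    calc |(a s + b s) / 2| * |Real.sin (θf s)| ≤ wmax * 1 :=
      mul_le_mul (hvb s) (Real.abs_sin_le_one _) (abs_nonneg _) hwm
    _ = wmax := mul_one _
  set aa := ∫ s in (0:ℝ)..T, f1 s with haa
  set bb := ∫ s in (0:ℝ)..T, f2 s with hbb
  have haq : q 0 - p 0 = aa := by rw [← hx0, ← hxT, hx T]; ring_nf; rfl
  have hbq : q 1 - p 1 = bb := by rw [← hy0, ← hyT, hy T]; ring_nf; rfl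
  set r := Real.sqrt (aa^2 + bb^2) with hr
  have hr0 : 0 ≤ r := Real.sqrt_nonneg _
  have hr2 : r^2 = aa^2 + bb^2 := Real.sq_sqrt (by positivity)
  have hnorm : ‖p - q‖ = r := by
    rw [plane_norm, hr]
    congr 1
    linear_combination (q 0 - p 0 + aa) * haq + (q 1 - p 1 + bb) * hbq
  have hint : aa^2 + bb^2 = ∫ s in (0:ℝ)..T, (aa * f1 s + bb * f2 s) := by
    rw [intervalIntegral.integral_add
      ((intervalIntegrable_of_bdd hm1 hb1).const_mul aa)
      ((intervalIntegrable_of_bdd hm2 hb2).const_mul bb),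
      intervalIntegral.integral_const_mul, intervalIntegral.integral_const_mul,
      ← haa, ← hbb]
    ring
  have hpt : ∀ s ∈ Set.uIoc (0:ℝ) T, ‖aa * f1 s + bb * f2 s‖ ≤ wmax * r := by
    intro s _
    have hcs : |aa * Real.cos (θf s) + bb * Real.sin (θf s)| ≤ r := by
      have h2 : (aa * Real.cos (θf s) + bb * Real.sin (θf s))^2 ≤ aa^2 + bb^2 := by
        nlinarith [Real.sin_sq_add_cos_sq (θf s),
          sq_nonneg (aa * Real.sin (θf s) - bb * Real.cos (θf s))]
      calc |aa * Real.cos (θf s) + bb * Real.sin (θf s)|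
          = Real.sqrt ((aa * Real.cos (θf s) + bb * Real.sin (θf s))^2) :=
            (Real.sqrt_sq_eq_abs _).symm
        _ ≤ Real.sqrt (aa^2 + bb^2) := Real.sqrt_le_sqrt h2
        _ = r := rfl
    have heq : aa * f1 s + bb * f2 s =
        (a s + b s) / 2 * (aa * Real.cos (θf s) + bb * Real.sin (θf s)) := by
      rw [hf1, hf2]; ring
    rw [Real.norm_eq_abs, heq, abs_mul]
    exact mul_le_mul (hvb s) hcs (abs_nonneg _) hwm
  have hkey : aa^2 + bb^2 ≤ wmax * r * T := by
    calc aa^2 + bb^2 ≤ |∫ s in (0:ℝ)..T, (aa * f1 s + bb * f2 s)| := by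
          rw [← hint]; exact le_abs_self _
      _ ≤ wmax * r * |T - 0| := intervalIntegral.norm_integral_le_of_norm_le_const hpt
      _ = wmax * r * T := by rw [sub_zero, abs_of_nonneg hT0]
  rw [hnorm]
  rcases eq_or_lt_of_le hr0 with h | h
  · rw [← h]; positivity
  · nlinarith

lemma tauDD_lower (hw : 0 < wmax) (hρ : 0 < ρ) (p : Plane) (θ0 : ℝ) (q : Plane) :
    ‖p - q‖ / wmax ≤ tauDD wmax ρ p θ0 q := by
  apply le_csInf (tau_set_nonempty hw hρ p θ0 q)
  intro T hT
  have h := dist_le_wmax_mul hT hρ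
  rw [div_le_iff₀ hw]
  linarith

lemma tauDD_measurable (hw : 0 < wmax) (hρ : 0 < ρ) (p : Plane) (θ0 : ℝ) :
    Measurable (fun q => tauDD wmax ρ p θ0 q) := by
  apply measurable_of_Iio
  intro cc
  have hopen : IsOpen {q : Plane | tauDD wmax ρ p θ0 q < cc} := by
    rw [Metric.isOpen_iff]
    intro q hq
    set τ := tauDD wmax ρ p θ0 q with hτ
    set ε := cc - τ with hεdef
    have hε : 0 < ε := sub_pos.2 hq
    obtain ⟨T, hTmem, hTlt⟩ :=
      Real.lt_sInf_add_pos (tau_set_nonempty hw hρ p θ0 q) (by positivity : 0 < ε / 3)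
    have hπ : (0:ℝ) < π := Real.pi_pos
    set W := min (π / 2) (wmax * ε / (9 * ρ)) with hWdef
    have hW0 : 0 < W := lt_min (by positivity) (by positivity)
    have hWle : W ≤ π / 2 := min_le_left _ _
    have hS : 0 < Real.sin W := Real.sin_pos_of_pos_of_lt_pi hW0 (by linarith)
    have hrot : 3 * ρ * W / wmax ≤ ε / 3 := by
      have h1 : W ≤ wmax * ε / (9 * ρ) := min_le_right _ _
      have h2 : 3 * ρ * W ≤ 3 * ρ * (wmax * ε / (9 * ρ)) := by
        apply mul_le_mul_of_nonneg_left h1 (by positivity)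
      have h3 : 3 * ρ * (wmax * ε / (9 * ρ)) = wmax * ε / 3 := by
        field_simp; ring
      rw [div_le_iff₀ hw]
      rw [h3] at h2
      linarith
    set δ := ε * wmax / (3 * (1 + 1 / Real.sin W)) with hδdef
    have hden : 0 < 1 + 1 / Real.sin W := by positivity
    have hδ0 : 0 < δ := by positivity
    refine ⟨δ, hδ0, ?_⟩
    intro q' hq'
    obtain ⟨hT0, xf, yf, θf, htraj, hx0, hy0, hθ0f, hxT, hyT⟩ := hTmem
    have hF1 : Feas wmax ρ (p 0) (p 1) θ0 (q 0) (q 1) (θf T) T :=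
      ⟨hT0, xf, yf, θf, htraj, hx0, hy0, hθ0f, hxT, hyT, rfl⟩
    obtain ⟨θ2, S, hF2, hSle⟩ :=
      feas_wiggle hw hρ (q 0) (q 1) (θf T) (q' 0) (q' 1) W hW0 hWle
    have hF := feas_trans hρ hF1 hF2
    have hτ' : tauDD wmax ρ p θ0 q' ≤ T + S := tauDD_le_of_feas hF
    have hd : Real.sqrt ((q' 0 - q 0)^2 + (q' 1 - q 1)^2) = dist q' q := by
      rw [dist_eq_norm, plane_norm]
    have hdlt : Real.sqrt ((q' 0 - q 0)^2 + (q' 1 - q 1)^2) < δ := by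
      rw [hd]; exact Metric.mem_ball.1 hq'
    have hScost : S ≤ ε / 3 + ε / 3 := by
      have h2 : Real.sqrt ((q' 0 - q 0)^2 + (q' 1 - q 1)^2) * (1 + 1 / Real.sin W) / wmax
          ≤ δ * (1 + 1 / Real.sin W) / wmax := by gcongr
      have h3 : δ * (1 + 1 / Real.sin W) / wmax = ε / 3 := by
        rw [hδdef]; field_simp
      linarith
    show tauDD wmax ρ p θ0 q' < cc
    have hTlt' : T < τ + ε / 3 := hTlt
    have : T + S < τ + ε := by linarith
    linarith
  exact hopen.measurableSet


/-- bounds on the coverage cost of the Median Stationing algorithm for DD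
robots in a compact convex `Q` of area `A`: if `p*` is an `m`-median configuration and
the headings `θᵢ` are arbitrary, then
`H*_m(Q)/w_max ≤ T_MS^DD ≤ H*_m(Q)/w_max + πρ/(2 w_max)`. -/
theorem dd_median_stationing_bounds
    (wmax ρ A : ℝ) (hw : 0 < wmax) (hρ : 0 < ρ) (hA : 0 < A)
    (Q : Set Plane) (hQc : IsCompact Q) (hQconv : Convex ℝ Q)
    (hvol : volume Q = ENNReal.ofReal A)
    (m : ℕ) (hm : 0 < m) (pstar : Fin m → Plane) (θs : Fin m → ℝ) :
    let H : (Fin m → Plane) → ℝ := fun ps => (1 / A) * ∫ q in Q, ⨅ i, ‖ps i - q‖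
    let TMS : ℝ := (1 / A) * ∫ q in Q, ⨅ i, tauDD wmax ρ (pstar i) (θs i) q
    (∀ i, pstar i ∈ Q) →
    (∀ ps : Fin m → Plane, (∀ i, ps i ∈ Q) → H pstar ≤ H ps) →
    H pstar / wmax ≤ TMS ∧ TMS ≤ H pstar / wmax + π * ρ / (2 * wmax) := by
  intro H TMS hpQ _hmin
  haveI : Nonempty (Fin m) := ⟨⟨0, hm⟩⟩
  set c := π * ρ / (2 * wmax) with hc
  have hc0 : 0 ≤ c := by positivity
  have hQm : MeasurableSet Q := hQc.isClosed.measurableSet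
  obtain ⟨R, hR⟩ := hQc.isBounded.exists_norm_le
  set f : Plane → ℝ := fun q => ⨅ i, ‖pstar i - q‖ with hf
  set g : Plane → ℝ := fun q => ⨅ i, tauDD wmax ρ (pstar i) (θs i) q with hg
  have hbdd1 : ∀ q : Plane, BddBelow (Set.range fun i => ‖pstar i - q‖) :=
    fun q => (Set.finite_range _).bddBelow
  have hbdd2 : ∀ q : Plane, BddBelow (Set.range fun i => tauDD wmax ρ (pstar i) (θs i) q) :=
    fun q => (Set.finite_range _).bddBelow
  have hf0 : ∀ q, 0 ≤ f q := fun q => le_ciInf fun i => norm_nonneg _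
  have hg0 : ∀ q, 0 ≤ g q := fun q => le_ciInf fun i => tauDD_nonneg _ _ _
  have hfg : ∀ q, f q / wmax ≤ g q := by
    intro q
    apply le_ciInf
    intro i
    have h1 : f q ≤ ‖pstar i - q‖ := ciInf_le (hbdd1 q) i
    have h2 := tauDD_lower hw hρ (pstar i) (θs i) q
    calc f q / wmax ≤ ‖pstar i - q‖ / wmax := by gcongr
      _ ≤ tauDD wmax ρ (pstar i) (θs i) q := h2
  have hgf : ∀ q, g q ≤ f q / wmax + c := by
    intro q
    obtain ⟨j, hj⟩ := Finite.exists_min (fun i => ‖pstar i - q‖)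
    have hfq : f q = ‖pstar j - q‖ := le_antisymm (ciInf_le (hbdd1 q) j) (le_ciInf hj)
    calc g q ≤ tauDD wmax ρ (pstar j) (θs j) q := ciInf_le (hbdd2 q) j
      _ ≤ ‖pstar j - q‖ / wmax + c := tauDD_le_upper hw hρ _ _ _
      _ = f q / wmax + c := by rw [hfq]
  have hfB : ∀ q ∈ Q, f q ≤ 2 * R := by
    intro q hq
    have h1 : f q ≤ ‖pstar ⟨0, hm⟩ - q‖ := ciInf_le (hbdd1 q) _
    calc f q ≤ ‖pstar ⟨0, hm⟩ - q‖ := h1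
      _ ≤ ‖pstar ⟨0, hm⟩‖ + ‖q‖ := norm_sub_le _ _
      _ ≤ R + R := add_le_add (hR _ (hpQ _)) (hR _ hq)
      _ = 2 * R := by ring
  have hfm : Measurable f :=
    Measurable.iInf fun i => ((continuous_const.sub continuous_id).norm).measurable
  have hgm : Measurable g :=
    Measurable.iInf fun i => tauDD_measurable hw hρ (pstar i) (θs i)
  have hQfin : volume Q < ⊤ := by rw [hvol]; exact ENNReal.ofReal_lt_top
  have hconst : ∀ C : ℝ, IntegrableOn (fun _ => C) Q volume :=
    fun C => integrableOn_const hQfin.ne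
  have hfint : IntegrableOn f Q volume := by
    apply Integrable.mono' (hconst (2 * R)) hfm.aestronglyMeasurable.restrict
    rw [ae_restrict_iff' hQm]
    filter_upwards with q hq
    rw [Real.norm_eq_abs, abs_of_nonneg (hf0 q)]
    exact hfB q hq
  have hgint : IntegrableOn g Q volume := by
    apply Integrable.mono' (hconst (2 * R / wmax + c)) hgm.aestronglyMeasurable.restrict
    rw [ae_restrict_iff' hQm]
    filter_upwards with q hq
    rw [Real.norm_eq_abs, abs_of_nonneg (hg0 q)]
    calc g q ≤ f q / wmax + c := hgf q
      _ ≤ 2 * R / wmax + c := by gcongr; exact hfB q hq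
  have hfdint : IntegrableOn (fun q => f q / wmax) Q volume := hfint.div_const wmax
  have hI1 : (∫ q in Q, f q / wmax) ≤ ∫ q in Q, g q :=
    integral_mono hfdint hgint hfg
  have hI2 : (∫ q in Q, g q) ≤ ∫ q in Q, (f q / wmax + c) :=
    integral_mono hgint (hfdint.add (hconst c)) hgf
  have hIfc : (∫ q in Q, (f q / wmax + c)) = (∫ q in Q, f q) / wmax + A * c := by
    rw [integral_add hfdint (hconst c), MeasureTheory.integral_div, setIntegral_const, measureReal_def, hvol,
      ENNReal.toReal_ofReal hA.le, smul_eq_mul]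
  have hdiv : (∫ q in Q, f q / wmax) = (∫ q in Q, f q) / wmax := MeasureTheory.integral_div _ _
  have hH : H pstar = (1 / A) * ∫ q in Q, f q := rfl
  have hT : TMS = (1 / A) * ∫ q in Q, g q := rfl
  have h1A : (0:ℝ) ≤ 1 / A := by positivity
  constructor
  · rw [hH, hT]
    calc (1 / A) * (∫ q in Q, f q) / wmax = (1 / A) * ((∫ q in Q, f q) / wmax) := by ring
      _ ≤ (1 / A) * ∫ q in Q, g q := by
          apply mul_le_mul_of_nonneg_left _ h1A
          rw [← hdiv]; exact hI1
  · rw [hH, hT]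
    have h2 : (1 / A) * (∫ q in Q, g q) ≤ (1 / A) * ((∫ q in Q, f q) / wmax + A * c) := by
      apply mul_le_mul_of_nonneg_left _ h1A
      rw [← hIfc]; exact hI2
    have h3 : (1 / A) * ((∫ q in Q, f q) / wmax + A * c) = (1 / A) * (∫ q in Q, f q) / wmax + c := by
      field_simp
    linarith
end
end

section
/- For all real numbers ρ > 0 and w with 0 < w ≤ 2ρ, the following inequality holds: (4ρ/w) ∫₀^{w/2} arcsin(√(s/(2ρ))) ds ≤ (3/4) √(ρ w). -/
open Real

lemma arcsin_le_aux {x : ℝ} (hx0 : 0 ≤ x) (hx : x ≤ Real.sqrt 2 / 2) :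
    Real.arcsin x ≤ (π * Real.sqrt 2 / 4) * x := by
  have hs2 : Real.sqrt 2 ^ 2 = 2 := Real.sq_sqrt (by norm_num)
  have hs2n : (0:ℝ) ≤ Real.sqrt 2 := Real.sqrt_nonneg 2
  have hx1 : x ≤ 1 := by nlinarith
  have hpi : (0:ℝ) < π := Real.pi_pos
  set y := Real.arcsin x with hy
  have hy0 : 0 ≤ y := Real.arcsin_nonneg.2 hx0
  have hsin : Real.sin y = x := Real.sin_arcsin (by linarith) hx1
  have harc : Real.arcsin (Real.sqrt 2 / 2) = π / 4 := by
    rw [← Real.sin_pi_div_four]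
    exact Real.arcsin_sin (by linarith) (by linarith)
  have hy4 : y ≤ π / 4 := by
    rw [hy, ← harc]
    exact Real.monotone_arcsin hx
  have hc := (strictConcaveOn_sin_Icc.concaveOn).2
    (show (0:ℝ) ∈ Set.Icc 0 π from Set.mem_Icc.2 ⟨le_refl 0, hpi.le⟩)
    (show π/4 ∈ Set.Icc 0 π from Set.mem_Icc.2 ⟨by positivity, by linarith⟩)
    (show (0:ℝ) ≤ 1 - 4 * y / π by rw [sub_nonneg, div_le_one hpi]; linarith)
    (show (0:ℝ) ≤ 4 * y / π by positivity) (by ring)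
  have key : (1 - 4 * y / π) • Real.sin 0 + (4 * y / π) • Real.sin (π/4)
      ≤ Real.sin ((1 - 4 * y / π) • (0:ℝ) + (4 * y / π) • (π/4)) := hc
  have heq : (1 - 4 * y / π) • (0:ℝ) + (4 * y / π) • (π/4) = y := by
    simp only [smul_eq_mul]
    field_simp
    ring
  rw [heq, hsin, Real.sin_zero, Real.sin_pi_div_four] at key
  simp only [smul_eq_mul, mul_zero, zero_add] at key
  have h1 : 4 * y / π * (Real.sqrt 2 / 2) = 2 * Real.sqrt 2 * y / π := by ring
  rw [h1] at key
  have h2 : 2 * Real.sqrt 2 * y ≤ π * x := by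
    have := (div_le_iff₀ hpi).1 key
    linarith [this]
  nlinarith [mul_le_mul_of_nonneg_left h2 hs2n]

/-- the estimate on the expected departure-arc length in the Strip
Loitering algorithm: for `0 < w ≤ 2ρ`,
`(4ρ/w) ∫₀^{w/2} arcsin(√(s/(2ρ))) ds ≤ (3/4) √(ρw)`. -/
theorem strip_loitering_departure_arc_bound
    (ρ w : ℝ) (hρ : 0 < ρ) (hw : 0 < w) (hwρ : w ≤ 2 * ρ) :
    (4 * ρ / w) * ∫ s in (0 : ℝ)..(w / 2), Real.arcsin (Real.sqrt (s / (2 * ρ))) ≤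
      (3 / 4) * Real.sqrt (ρ * w) := by
  have h2ρ : (0:ℝ) < 2 * ρ := by linarith
  have ha : (0:ℝ) < w / 2 := by linarith
  have hs2 : Real.sqrt 2 * Real.sqrt 2 = 2 := Real.mul_self_sqrt (by norm_num)
  have hs2n : (0:ℝ) < Real.sqrt 2 := Real.sqrt_pos.2 (by norm_num)
  have hsρ : Real.sqrt ρ * Real.sqrt ρ = ρ := Real.mul_self_sqrt hρ.le
  have hsρp : (0:ℝ) < Real.sqrt ρ := Real.sqrt_pos.2 hρ
  set C : ℝ := π * Real.sqrt 2 / 4 with hC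
  -- pointwise bound and integral monotonicity
  have hcont1 : Continuous fun s : ℝ => Real.arcsin (Real.sqrt (s / (2 * ρ))) :=
    Real.continuous_arcsin.comp (Real.continuous_sqrt.comp (continuous_id.div_const _))
  have hcont2 : Continuous fun s : ℝ => C * Real.sqrt (s / (2 * ρ)) :=
    continuous_const.mul (Real.continuous_sqrt.comp (continuous_id.div_const _))
  have hmono : (∫ s in (0:ℝ)..(w/2), Real.arcsin (Real.sqrt (s / (2 * ρ))))
      ≤ ∫ s in (0:ℝ)..(w/2), C * Real.sqrt (s / (2 * ρ)) := by
    apply intervalIntegral.integral_mono_on ha.le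
      (hcont1.intervalIntegrable _ _) (hcont2.intervalIntegrable _ _)
    intro s hs
    have hs0 : 0 ≤ s := hs.1
    have hle : Real.sqrt (s / (2 * ρ)) ≤ Real.sqrt 2 / 2 := by
      rw [Real.sqrt_le_iff]
      constructor
      · positivity
      · rw [div_pow, div_le_iff₀ h2ρ]
        have : s ≤ w / 2 := hs.2
        nlinarith [hs2]
    exact arcsin_le_aux (Real.sqrt_nonneg _) hle
  -- compute the majorant integral
  have hrw : (∫ s in (0:ℝ)..(w/2), C * Real.sqrt (s / (2 * ρ)))
      = C / Real.sqrt (2 * ρ) * ((2/3) * ((w/2) * Real.sqrt (w/2))) := by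
    have e1 : ∀ s : ℝ, C * Real.sqrt (s / (2 * ρ))
        = (C / Real.sqrt (2 * ρ)) * Real.sqrt s := by
      intro s
      rw [Real.sqrt_div' s h2ρ.le]
      ring
    simp only [e1]
    rw [intervalIntegral.integral_const_mul]
    congr 1
    have e2 : ∀ s : ℝ, s ∈ Set.uIcc (0:ℝ) (w/2) → Real.sqrt s = s ^ ((1:ℝ)/2) := by
      intro s hs
      rw [Real.sqrt_eq_rpow]
    rw [intervalIntegral.integral_congr e2, integral_rpow (Or.inl (by norm_num))]
    rw [Real.zero_rpow (by norm_num), show (1:ℝ)/2 + 1 = 1/2 + 1 from rfl]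
    rw [Real.rpow_add ha, Real.rpow_one, ← Real.sqrt_eq_rpow]
    ring
  -- put together
  have hkey : (4 * ρ / w) * (C / Real.sqrt (2 * ρ) * ((2/3) * ((w/2) * Real.sqrt (w/2))))
      = (π * Real.sqrt 2 / 6) * Real.sqrt (ρ * w) := by
    rw [Real.sqrt_div hw.le 2, Real.sqrt_mul (by norm_num : (0:ℝ) ≤ 2) ρ,
      Real.sqrt_mul hρ.le w, hC]
    have e5 : Real.sqrt 2 ^ 3 = 2 * Real.sqrt 2 := by
      rw [pow_succ, Real.sq_sqrt (by norm_num : (0:ℝ) ≤ 2)]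
    have e6 : Real.sqrt ρ ^ 2 = ρ := Real.sq_sqrt hρ.le
    field_simp
    ring_nf
    rw [Real.sq_sqrt (by norm_num : (0:ℝ) ≤ 2), e6]
    ring
  have hbound : (π * Real.sqrt 2 / 6) ≤ 3 / 4 := by
    have hpi : π < 3.15 := Real.pi_lt_d2
    have h2 : Real.sqrt 2 ≤ 1.43 := by
      rw [Real.sqrt_le_iff]; norm_num
    nlinarith [Real.pi_pos, hs2n]
  calc (4 * ρ / w) * ∫ s in (0:ℝ)..(w/2), Real.arcsin (Real.sqrt (s / (2 * ρ)))
      ≤ (4 * ρ / w) * ∫ s in (0:ℝ)..(w/2), C * Real.sqrt (s / (2 * ρ)) := by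
        apply mul_le_mul_of_nonneg_left hmono (by positivity)
    _ = (π * Real.sqrt 2 / 6) * Real.sqrt (ρ * w) := by rw [hrw, hkey]
    _ ≤ (3/4) * Real.sqrt (ρ * w) :=
        mul_le_mul_of_nonneg_right hbound (Real.sqrt_nonneg _)
end
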